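/- Let Ω be a finite set of size n, fix k with 1 ≤ k ≤ n, and let P be a probability distribution on Ω. For q_min ∈ (0,1], the number of k-element subsets T ⊆ Ω with ∑_{ω∈T} P(ω) ≥ q_min, divided by C(n,k), is at most (k/n)/q_min. -/

import Mathlib

open Finset

lemma count_mem_powersetCard {Ω : Type*} [Fintype Ω] [DecidableEq Ω] {k : ℕ} (hk : 1 ≤ k) (ω : Ω) :
    (((Finset.univ : Finset Ω).powersetCard k).filter (fun T => ω ∈ T)).card
      = (Fintype.card Ω - 1).choose (k - 1) := by
  have : (((Finset.univ : Finset Ω).powersetCard k).filter (fun T => ω ∈ T)).card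
      = ((Finset.univ.erase ω).powersetCard (k - 1)).card := by
    apply Finset.card_bij (fun T _ => T.erase ω)
    · intro T hT
      simp only [mem_filter, mem_powersetCard] at hT
      simp only [mem_powersetCard]
      refine ⟨fun x hx => ?_, ?_⟩
      · rw [mem_erase] at hx ⊢
        exact ⟨hx.1, mem_univ _⟩
      · rw [card_erase_of_mem hT.2, hT.1.2]
    · intro T hT S hS h
      simp only [mem_filter] at hT hS
      rw [← insert_erase hT.2, ← insert_erase hS.2, h]
    · intro T hT
      simp only [mem_powersetCard] at hT
      have hω : ω ∉ T := fun h => (mem_erase.mp (hT.1 h)).1 rfl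
      refine ⟨insert ω T, ?_, ?_⟩
      · simp only [mem_filter, mem_powersetCard, mem_insert]
        refine ⟨⟨subset_univ _, ?_⟩, by simp⟩
        rw [card_insert_of_notMem hω, hT.2]
        omega
      · rw [erase_insert hω]
  rw [this, card_powersetCard, card_erase_of_mem (mem_univ ω), card_univ]

open Finset in
theorem famine_of_favorable_targets {Ω : Type*} [Fintype Ω] [DecidableEq Ω]
    (n k : ℕ) (hn : Fintype.card Ω = n) (hk : 1 ≤ k) (hkn : k ≤ n)
    (P : Ω → ℝ) (hP : ∀ ω, 0 ≤ P ω) (hsum : ∑ ω, P ω = 1)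
    (qmin : ℝ) (hq : 0 < qmin) (hq1 : qmin ≤ 1) :
    ((((Finset.univ : Finset Ω).powersetCard k).filter
        (fun T => qmin ≤ ∑ ω ∈ T, P ω)).card : ℝ) / (n.choose k : ℝ)
      ≤ ((k : ℝ) / n) / qmin := by
  have hn0 : 0 < n := lt_of_lt_of_le hk hkn
  set F := (((Finset.univ : Finset Ω).powersetCard k).filter (fun T => qmin ≤ ∑ ω ∈ T, P ω))
    with hF
  have hkey : ∑ T ∈ (Finset.univ : Finset Ω).powersetCard k, ∑ ω ∈ T, P ω
      = ((n-1).choose (k-1) : ℝ) := by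
    rw [Finset.sum_comm' (t' := (Finset.univ : Finset Ω))
      (s' := fun ω => ((Finset.univ : Finset Ω).powersetCard k).filter (fun T => ω ∈ T))
      (fun T ω => by simp only [mem_filter, mem_univ, true_and, and_true, and_comm])]
    simp only [Finset.sum_const, nsmul_eq_mul]
    calc ∑ ω : Ω, ((((Finset.univ : Finset Ω).powersetCard k).filter
            (fun T => ω ∈ T)).card : ℝ) * P ω
        = ∑ ω : Ω, ((n-1).choose (k-1) : ℝ) * P ω := by
          refine Finset.sum_congr rfl fun ω _ => ?_
          rw [count_mem_powersetCard hk, hn]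
      _ = ((n-1).choose (k-1) : ℝ) := by rw [← Finset.mul_sum, hsum, mul_one]
  have hle : qmin * (F.card : ℝ) ≤ ((n-1).choose (k-1) : ℝ) := by
    rw [← hkey]
    calc qmin * (F.card : ℝ) = ∑ _T ∈ F, qmin := by rw [sum_const, nsmul_eq_mul, mul_comm]
      _ ≤ ∑ T ∈ F, ∑ ω ∈ T, P ω :=
          Finset.sum_le_sum fun T hT => (mem_filter.mp hT).2
      _ ≤ _ := Finset.sum_le_sum_of_subset_of_nonneg (filter_subset _ _)
          (fun T _ _ => Finset.sum_nonneg fun ω _ => hP ω)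
  have hchoose : (n : ℝ) * ((n-1).choose (k-1) : ℝ) = (k : ℝ) * (n.choose k : ℝ) := by
    have h := Nat.add_one_mul_choose_eq (n-1) (k-1)
    have h1 : n - 1 + 1 = n := by omega
    have h2 : k - 1 + 1 = k := by omega
    rw [h1, h2] at h
    exact_mod_cast congrArg (Nat.cast (R := ℝ)) (h.trans (mul_comm _ _))
  have hc0 : (0:ℝ) < (n.choose k : ℝ) := by exact_mod_cast Nat.choose_pos hkn
  have hnr : (0:ℝ) < (n : ℝ) := by exact_mod_cast hn0
  rw [div_le_div_iff₀ hc0 hq, div_mul_eq_mul_div, le_div_iff₀ hnr]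
  nlinarith [hle, hchoose]
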